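/- Let A be a ring and I a two-sided idempotent ideal of A such that {a ∈ A : aI = 0} = 0. Then the following are equivalent: (1) ann_M(I) is a direct summand of M for every right A-module M; (2) A/I is flat as a left A-module, and for every right A-module F with ann_F(I) = 0, the quotient F/FI is projective as a right A/I-module. -/

import Mathlib

open MulOpposite TensorProduct

variable (A : Type) [Ring A]

/-- `MI`: the submodule of the right `A`-module `M` generated by the products `m·a`
with `m ∈ M`, `a ∈ I`. -/
def rIdealSMul (I : Ideal A) (M : Type) [AddCommGroup M] [Module Aᵐᵒᵖ M] :
    Submodule Aᵐᵒᵖ M :=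
  Submodule.span Aᵐᵒᵖ {x : M | ∃ (m : M) (a : A), a ∈ I ∧ x = op a • m}

/-- `ann_M(I) = {m ∈ M | m·a = 0 for all a ∈ I}` as a submodule of the right `A`-module `M`. -/
def rAnn (I : Ideal A) (M : Type) [AddCommGroup M] [Module Aᵐᵒᵖ M] :
    Submodule Aᵐᵒᵖ M where
  carrier := {m : M | ∀ a ∈ I, op a • m = 0}
  add_mem' := by
    intro x y hx hy a ha
    rw [smul_add, hx a ha, hy a ha, add_zero]
  zero_mem' := by
    intro a _
    rw [smul_zero]
  smul_mem' := by
    intro c m hm a ha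
    rw [smul_smul]
    have h1 : op a * c = op (c.unop * a) := by
      rw [op_mul, op_unop]
    rw [h1]
    exact hm (c.unop * a) (I.mul_mem_left c.unop ha)

section PureTensor

/-- The subgroup of relations of `M ⊗[ℤ] N` whose quotient is the balanced tensor product
`M ⊗[A] N` of a right `A`-module `M` and a left `A`-module `N`. -/
noncomputable def balancedRel (M N : Type) [AddCommGroup M] [Module Aᵐᵒᵖ M]
    [AddCommGroup N] [Module A N] : AddSubgroup (M ⊗[ℤ] N) :=
  AddSubgroup.closure
    {x : M ⊗[ℤ] N | ∃ (m : M) (a : A) (n : N), x = (op a • m) ⊗ₜ[ℤ] n - m ⊗ₜ[ℤ] (a • n)}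

/-- The balanced tensor product `M ⊗[A] N` over the (possibly noncommutative) ring `A`. -/
noncomputable def RTensor (M N : Type) [AddCommGroup M] [Module Aᵐᵒᵖ M]
    [AddCommGroup N] [Module A N] : Type :=
  (M ⊗[ℤ] N) ⧸ balancedRel A M N

noncomputable instance (M N : Type) [AddCommGroup M] [Module Aᵐᵒᵖ M] [AddCommGroup N]
    [Module A N] : AddCommGroup (RTensor A M N) :=
  inferInstanceAs (AddCommGroup ((M ⊗[ℤ] N) ⧸ balancedRel A M N))

/-- The canonical morphism `M ⊗[A] I ⟶ M ⊗[A] A` induced by the inclusion `I → A`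
of a left ideal `I`, for a right `A`-module `M`. -/
noncomputable def pureMap (I : Ideal A) (M : Type) [AddCommGroup M] [Module Aᵐᵒᵖ M] :
    RTensor A M I →+ RTensor A M A :=
  QuotientAddGroup.map (balancedRel A M I) (balancedRel A M A)
    (LinearMap.lTensor M (I.subtype.toAddMonoidHom.toIntLinearMap)).toAddMonoidHom
    (by
      rw [balancedRel, AddSubgroup.closure_le]
      rintro x ⟨m, a, n, rfl⟩
      simp only [AddSubgroup.coe_comap, Set.mem_preimage, LinearMap.toAddMonoidHom_coe,
        map_sub, LinearMap.lTensor_tmul, AddMonoidHom.coe_toIntLinearMap,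
        LinearMap.toAddMonoidHom_coe, Submodule.coe_subtype, SetLike.mem_coe]
      exact AddSubgroup.subset_closure ⟨m, a, (n : A), by rw [Submodule.coe_smul]⟩)

end PureTensor

section QuotientRing

/-- The ring congruence attached to a two-sided ideal `I` of `A`; its quotient is the
quotient ring `A/I`. -/
def idealCon (I : Ideal A) (hright : ∀ a ∈ I, ∀ b : A, a * b ∈ I) : RingCon A where
  r a b := a - b ∈ I
  iseqv := by
    refine ⟨fun a => by simpa using I.zero_mem, fun {a b} h => ?_, fun {a b c} h h' => ?_⟩
    · have := I.neg_mem h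
      rwa [neg_sub] at this
    · have := I.add_mem h h'
      rwa [sub_add_sub_cancel] at this
  mul' := by
    intro w x y z h h'
    show w * y - x * z ∈ I
    have h1 : (w - x) * y ∈ I := hright _ h y
    have h2 : x * (y - z) ∈ I := by simpa [smul_eq_mul] using I.smul_mem x h'
    have h3 := I.add_mem h1 h2
    have heq : (w - x) * y + x * (y - z) = w * y - x * z := by noncomm_ring
    rwa [heq] at h3
  add' := by
    intro w x y z h h'
    show w + y - (x + z) ∈ I
    have h3 := I.add_mem h h'
    have heq : w - x + (y - z) = w + y - (x + z) := by abel
    rwa [heq] at h3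

variable (I : Ideal A) (hright : ∀ a ∈ I, ∀ b : A, a * b ∈ I)
variable (F : Type) [AddCommGroup F] [Module Aᵐᵒᵖ F]

/-- `F/FI` is a right module over the quotient ring `A/I`. -/
instance quotSMul : SMul (idealCon A I hright).Quotientᵐᵒᵖ (F ⧸ rIdealSMul A I F) :=
  ⟨fun q z => Quotient.liftOn' q.unop (fun a => op a • z) (by
    intro a b h
    obtain ⟨m, rfl⟩ := Submodule.Quotient.mk_surjective _ z
    show op a • Submodule.Quotient.mk m = op b • Submodule.Quotient.mk m
    rw [← Submodule.Quotient.mk_smul, ← Submodule.Quotient.mk_smul, Submodule.Quotient.eq]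
    have : op a • m - op b • m = op (a - b) • m := by
      rw [← sub_smul]
      congr 1
    rw [this]
    exact Submodule.subset_span ⟨m, a - b, h, rfl⟩)⟩

instance quotMulAction :
    MulAction (idealCon A I hright).Quotientᵐᵒᵖ (F ⧸ rIdealSMul A I F) where
  one_smul z := one_smul Aᵐᵒᵖ z
  mul_smul q q' z := by
    induction q using MulOpposite.rec' with
    | h a =>
      induction q' using MulOpposite.rec' with
      | h b =>
        induction a using Quotient.inductionOn' with
        | h a =>
          induction b using Quotient.inductionOn' with
          | h b => exact mul_smul (op a) (op b) z

instance quotDistribMulAction :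
    DistribMulAction (idealCon A I hright).Quotientᵐᵒᵖ (F ⧸ rIdealSMul A I F) where
  smul_zero q := by
    induction q using MulOpposite.rec' with
    | h a =>
      induction a using Quotient.inductionOn' with
      | h a => exact smul_zero (op a)
  smul_add q z z' := by
    induction q using MulOpposite.rec' with
    | h a =>
      induction a using Quotient.inductionOn' with
      | h a => exact smul_add (op a) z z'

instance quotModule :
    Module (idealCon A I hright).Quotientᵐᵒᵖ (F ⧸ rIdealSMul A I F) where
  add_smul q q' z := by
    induction q using MulOpposite.rec' with
    | h a =>
      induction q' using MulOpposite.rec' with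
      | h b =>
        induction a using Quotient.inductionOn' with
        | h a =>
          induction b using Quotient.inductionOn' with
          | h b => exact add_smul (op a) (op b) z
  zero_smul z := zero_smul Aᵐᵒᵖ z

end QuotientRing

section AuxBasic

variable {A} {M N : Type} [AddCommGroup M] [Module Aᵐᵒᵖ M] [AddCommGroup N] [Module A N]

/-- The canonical projection onto the balanced tensor product. -/
noncomputable def rtMk : M ⊗[ℤ] N →+ RTensor A M N :=
  QuotientAddGroup.mk' (balancedRel A M N)

theorem rtMk_surjective :
    Function.Surjective (rtMk (A := A) (M := M) (N := N)) :=
  QuotientAddGroup.mk'_surjective _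

theorem rtMk_rel (m : M) (a : A) (n : N) :
    rtMk (A := A) ((op a • m) ⊗ₜ[ℤ] n) = rtMk (m ⊗ₜ[ℤ] (a • n)) :=
  (QuotientAddGroup.mk'_eq_mk' _).mpr
    ⟨-((op a • m) ⊗ₜ[ℤ] n - m ⊗ₜ[ℤ] (a • n)),
      AddSubgroup.neg_mem _ (AddSubgroup.subset_closure ⟨m, a, n, rfl⟩), by abel⟩

theorem RTensor.induction_on {p : RTensor A M N → Prop} (x : RTensor A M N)
    (zero : p 0) (tmul : ∀ (m : M) (n : N), p (rtMk (m ⊗ₜ[ℤ] n)))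
    (add : ∀ x y, p x → p y → p (x + y)) : p x := by
  obtain ⟨y, rfl⟩ := rtMk_surjective (A := A) x
  induction y with
  | zero => simpa using zero
  | tmul m n => exact tmul m n
  | add x y hx hy => rw [map_add]; exact add _ _ hx hy

theorem addHom_ext_rt {P : Type} [AddCommMonoid P] {f g : RTensor A M N →+ P}
    (h : ∀ (m : M) (n : N), f (rtMk (m ⊗ₜ[ℤ] n)) = g (rtMk (m ⊗ₜ[ℤ] n))) : f = g := by
  ext x
  induction x using RTensor.induction_on with
  | zero => simp
  | tmul m n => exact h m n
  | add x y hx hy => rw [map_add, map_add, hx, hy]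

end AuxBasic

section NuMu

variable {A} {M : Type} [AddCommGroup M] [Module Aᵐᵒᵖ M]

/-- The canonical evaluation `M ⊗[ℤ] A → M`, `m ⊗ b ↦ m·b`. -/
noncomputable def nuAux : M ⊗[ℤ] A →+ M :=
  TensorProduct.liftAddHom
    { toFun := fun m =>
        { toFun := fun b => op b • m
          map_zero' := by simp
          map_add' := fun b c => by show op (b + c) • m = _; rw [op_add, add_smul] }
      map_zero' := by ext b; simp
      map_add' := fun m m' => by ext b; show op b • (m + m') = _; rw [smul_add]; rfl }
    (fun z m b => by
      show op b • (z • m) = op (z • b) • m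
      rw [op_smul, ← smul_comm z (op b) m]
      exact (smul_assoc z (op b) m).symm)

@[simp] theorem nuAux_tmul (m : M) (b : A) : nuAux (m ⊗ₜ[ℤ] b) = op b • m := rfl

/-- The canonical isomorphism-map `M ⊗[A] A → M`. -/
noncomputable def nuA : RTensor A M A →+ M :=
  QuotientAddGroup.lift (balancedRel A M A) nuAux
    (by
      intro x hx
      refine (AddSubgroup.closure_le (AddMonoidHom.ker nuAux)).mpr ?_ hx
      rintro y ⟨m, a, n, rfl⟩
      simp only [SetLike.mem_coe, AddMonoidHom.mem_ker]
      rw [map_sub, nuAux_tmul, nuAux_tmul, smul_eq_mul, smul_smul, ← op_mul, sub_eq_zero])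

@[simp] theorem nuA_mk_tmul (m : M) (b : A) : nuA (rtMk (A := A) (m ⊗ₜ[ℤ] b)) = op b • m := rfl

/-- The inverse `M → M ⊗[A] A`. -/
noncomputable def iotaA : M →+ RTensor A M A where
  toFun m := rtMk (m ⊗ₜ[ℤ] (1 : A))
  map_zero' := by
    show rtMk ((0 : M) ⊗ₜ[ℤ] (1 : A)) = 0
    rw [TensorProduct.zero_tmul, map_zero]
  map_add' m m' := by
    show rtMk ((m + m') ⊗ₜ[ℤ] (1 : A)) = _
    rw [TensorProduct.add_tmul, map_add]

theorem iotaA_nuA (x : RTensor A M A) : iotaA (nuA x) = x := by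
  induction x using RTensor.induction_on with
  | zero => simp
  | tmul m b =>
      show rtMk ((op b • m) ⊗ₜ[ℤ] (1:A)) = _
      rw [rtMk_rel m b (1 : A), smul_eq_mul, mul_one]
  | add x y hx hy => rw [map_add, map_add, hx, hy]

theorem nuA_injective : Function.Injective (nuA (A := A) (M := M)) :=
  Function.LeftInverse.injective iotaA_nuA

end NuMu
section MuI

variable {A} (I : Ideal A) {M : Type} [AddCommGroup M] [Module Aᵐᵒᵖ M]

/-- The multiplication map `M ⊗[A] I → M`. -/
noncomputable def muI : RTensor A M I →+ M :=
  nuA.comp (pureMap A I M)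

@[simp] theorem pureMap_mk_tmul (m : M) (x : I) :
    pureMap A I M (rtMk (m ⊗ₜ[ℤ] x)) = rtMk (m ⊗ₜ[ℤ] (x : A)) := rfl

@[simp] theorem muI_mk_tmul (m : M) (x : I) :
    muI I (rtMk (m ⊗ₜ[ℤ] x)) = op (x : A) • m := rfl

theorem ker_pureMap_le_ker_muI {x : RTensor A M I} (h : pureMap A I M x = 0) :
    muI I x = 0 := by
  rw [muI, AddMonoidHom.comp_apply, h, map_zero]

/-- Tensors with a torsion element vanish, by idempotency of `I`. -/
theorem rtMk_tmul_eq_zero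
    (hidem : ∀ a ∈ I, a ∈ AddSubgroup.closure {x : A | ∃ b ∈ I, ∃ c ∈ I, x = b * c})
    {x : M} (hx : x ∈ rAnn A I M) (a : I) :
    rtMk (A := A) (x ⊗ₜ[ℤ] a) = 0 := by
  let T : AddSubgroup A :=
    { carrier := {y : A | ∃ h : y ∈ I, rtMk (A := A) (x ⊗ₜ[ℤ] (⟨y, h⟩ : I)) = 0}
      zero_mem' := ⟨I.zero_mem, by
        have : ((⟨0, I.zero_mem⟩ : I)) = (0 : I) := rfl
        rw [this, TensorProduct.tmul_zero, map_zero]⟩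
      add_mem' := by
        rintro y z ⟨hy, hy0⟩ ⟨hz, hz0⟩
        refine ⟨I.add_mem hy hz, ?_⟩
        have : (⟨y + z, I.add_mem hy hz⟩ : I) = ⟨y, hy⟩ + ⟨z, hz⟩ := rfl
        rw [this, TensorProduct.tmul_add, map_add, hy0, hz0, add_zero]
      neg_mem' := by
        rintro y ⟨hy, hy0⟩
        refine ⟨I.neg_mem hy, ?_⟩
        have : (⟨-y, I.neg_mem hy⟩ : I) = -(⟨y, hy⟩ : I) := rfl
        rw [this, TensorProduct.tmul_neg, map_neg, hy0, neg_zero] }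
  have key : (a : A) ∈ T := by
    refine (AddSubgroup.closure_le T).mpr ?_ (hidem a a.2)
    rintro y ⟨b, hb, c, hc, rfl⟩
    refine ⟨I.mul_mem_left b hc, ?_⟩
    have h1 : (⟨b * c, I.mul_mem_left b hc⟩ : I) = b • (⟨c, hc⟩ : I) := rfl
    rw [h1, ← rtMk_rel, hx b hb, TensorProduct.zero_tmul, map_zero]
  obtain ⟨h, h0⟩ := key
  have : (⟨(a : A), h⟩ : I) = a := Subtype.ext rfl
  rwa [this] at h0

/-- If the annihilator splits off, it meets `MI` trivially. -/
theorem eq_zero_of_ann_of_smul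
    {M : Type} [AddCommGroup M] [Module Aᵐᵒᵖ M]
    (h : ∃ N' : Submodule Aᵐᵒᵖ M, rAnn A I M ⊓ N' = ⊥ ∧ rAnn A I M ⊔ N' = ⊤)
    {x : M} (hx : x ∈ rAnn A I M) (hx' : x ∈ rIdealSMul A I M) : x = 0 := by
  obtain ⟨N', h1, h2⟩ := h
  have hle : rIdealSMul A I M ≤ N' := by
    rw [rIdealSMul, Submodule.span_le]
    rintro _ ⟨m, a, ha, rfl⟩
    have hm : m ∈ rAnn A I M ⊔ N' := h2 ▸ Submodule.mem_top
    obtain ⟨t, ht, n, hn, rfl⟩ := Submodule.mem_sup.mp hm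
    rw [smul_add, ht a ha, zero_add]
    exact N'.smul_mem _ hn
  have : x ∈ rAnn A I M ⊓ N' := ⟨hx, hle hx'⟩
  rwa [h1, Submodule.mem_bot] at this

end MuI

section RtModule

variable {A} (I : Ideal A) (hright : ∀ a ∈ I, ∀ b : A, a * b ∈ I)
variable (M : Type) [AddCommGroup M] [Module Aᵐᵒᵖ M]

/-- Right multiplication by `a` on the two-sided ideal `I`. -/
def idealRMul (a : A) : I →+ I where
  toFun x := ⟨(x : A) * a, hright _ x.2 a⟩
  map_zero' := Subtype.ext (zero_mul a)
  map_add' x y := Subtype.ext (add_mul (x : A) (y : A) a)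

/-- Right multiplication by `a` on `M ⊗[A] I`. -/
noncomputable def rtSmul (a : A) : RTensor A M I →+ RTensor A M I :=
  QuotientAddGroup.map _ _
    (LinearMap.lTensor M (idealRMul I hright a).toIntLinearMap).toAddMonoidHom
    (by
      rw [balancedRel, AddSubgroup.closure_le]
      rintro x ⟨m, b, n, rfl⟩
      simp only [AddSubgroup.coe_comap, Set.mem_preimage, LinearMap.toAddMonoidHom_coe,
        map_sub, LinearMap.lTensor_tmul, AddMonoidHom.coe_toIntLinearMap, SetLike.mem_coe]
      refine AddSubgroup.subset_closure ⟨m, b, idealRMul I hright a n, ?_⟩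
      have : idealRMul I hright a (b • n) = b • idealRMul I hright a n :=
        Subtype.ext (mul_assoc b (n : A) a)
      rw [this])

@[simp] theorem rtSmul_mk_tmul (a : A) (m : M) (x : I) :
    rtSmul I hright M a (rtMk (m ⊗ₜ[ℤ] x)) = rtMk (m ⊗ₜ[ℤ] (idealRMul I hright a x)) := rfl

/-- `M ⊗[A] I` is a right `A`-module. -/
noncomputable def rtModule : Module Aᵐᵒᵖ (RTensor A M I) where
  smul c ξ := rtSmul I hright M c.unop ξ
  one_smul ξ := by
    show rtSmul I hright M 1 ξ = ξ
    induction ξ using RTensor.induction_on with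
    | zero => rw [map_zero]
    | tmul m x =>
        rw [rtSmul_mk_tmul]
        congr 1
        exact congrArg _ (Subtype.ext (mul_one (x : A)))
    | add x y hx hy => rw [map_add, hx, hy]
  mul_smul c c' ξ := by
    show rtSmul I hright M (c * c').unop ξ =
      rtSmul I hright M c.unop (rtSmul I hright M c'.unop ξ)
    induction ξ using RTensor.induction_on with
    | zero => rw [map_zero, map_zero, map_zero]
    | tmul m x =>
        rw [rtSmul_mk_tmul, rtSmul_mk_tmul, rtSmul_mk_tmul]
        congr 1
        exact congrArg _ (Subtype.ext (mul_assoc (x : A) c'.unop c.unop).symm)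
    | add x y hx hy => rw [map_add, map_add, map_add, hx, hy]
  smul_zero c := map_zero _
  smul_add c ξ ξ' := map_add _ ξ ξ'
  add_smul c c' ξ := by
    show rtSmul I hright M (c + c').unop ξ =
      rtSmul I hright M c.unop ξ + rtSmul I hright M c'.unop ξ
    induction ξ using RTensor.induction_on with
    | zero => rw [map_zero, map_zero, map_zero, add_zero]
    | tmul m x =>
        rw [rtSmul_mk_tmul, rtSmul_mk_tmul, rtSmul_mk_tmul, ← map_add, ← TensorProduct.tmul_add]
        congr 1
        exact congrArg _ (Subtype.ext (mul_add (x : A) c.unop c'.unop))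
    | add x y hx hy =>
        rw [map_add, map_add, map_add, hx, hy]
        abel
  zero_smul ξ := by
    show rtSmul I hright M (0 : Aᵐᵒᵖ).unop ξ = 0
    induction ξ using RTensor.induction_on with
    | zero => rw [map_zero]
    | tmul m x =>
        rw [rtSmul_mk_tmul]
        have : idealRMul I hright (0 : Aᵐᵒᵖ).unop x = 0 := Subtype.ext (mul_zero (x : A))
        rw [this, TensorProduct.tmul_zero, map_zero]
    | add x y hx hy => rw [map_add, hx, hy, add_zero]

end RtModule
section PartA

variable {A}

theorem partA (I : Ideal A) (hright : ∀ a ∈ I, ∀ b : A, a * b ∈ I)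
    (hidem : ∀ a ∈ I, a ∈ AddSubgroup.closure {x : A | ∃ b ∈ I, ∃ c ∈ I, x = b * c})
    (h : ∀ (M : Type) [AddCommGroup M] [Module Aᵐᵒᵖ M],
        ∃ N' : Submodule Aᵐᵒᵖ M, rAnn A I M ⊓ N' = ⊥ ∧ rAnn A I M ⊔ N' = ⊤)
    (M : Type) [AddCommGroup M] [Module Aᵐᵒᵖ M] :
    Function.Injective (pureMap A I M) := by
  rw [injective_iff_map_eq_zero]
  intro ξ hξ
  have hmu : muI I ξ = 0 := ker_pureMap_le_ker_muI I hξ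
  letI : Module Aᵐᵒᵖ (RTensor A M I) := rtModule I hright M
  -- ξ is annihilated by I
  have hann : ξ ∈ rAnn A I (RTensor A M I) := by
    intro a ha
    have key : ∀ ζ : RTensor A M I,
        rtSmul I hright M a ζ = rtMk ((muI I ζ) ⊗ₜ[ℤ] (⟨a, ha⟩ : I)) := by
      intro ζ
      induction ζ using RTensor.induction_on with
      | zero => rw [map_zero, map_zero, TensorProduct.zero_tmul, map_zero]
      | tmul m x =>
          rw [rtSmul_mk_tmul, muI_mk_tmul, rtMk_rel]
          congr 1
      | add x y hx hy =>
          rw [map_add, map_add, hx, hy, TensorProduct.add_tmul, map_add]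
    show rtSmul I hright M a ξ = 0
    rw [key ξ, hmu, TensorProduct.zero_tmul, map_zero]
  -- ξ lies in (M ⊗ I)·I
  have hsmul : ∀ ζ : RTensor A M I, ζ ∈ rIdealSMul A I (RTensor A M I) := by
    intro ζ
    induction ζ using RTensor.induction_on with
    | zero => exact Submodule.zero_mem _
    | tmul m x =>
        let T : AddSubgroup A :=
          { carrier := {y : A | ∃ h : y ∈ I,
              rtMk (A := A) (m ⊗ₜ[ℤ] (⟨y, h⟩ : I)) ∈ rIdealSMul A I (RTensor A M I)}
            zero_mem' := ⟨I.zero_mem, by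
              have : ((⟨0, I.zero_mem⟩ : I)) = (0 : I) := rfl
              rw [this, TensorProduct.tmul_zero, map_zero]
              exact Submodule.zero_mem _⟩
            add_mem' := by
              rintro y z ⟨hy, hy0⟩ ⟨hz, hz0⟩
              refine ⟨I.add_mem hy hz, ?_⟩
              have : (⟨y + z, I.add_mem hy hz⟩ : I) = ⟨y, hy⟩ + ⟨z, hz⟩ := rfl
              rw [this, TensorProduct.tmul_add, map_add]
              exact Submodule.add_mem _ hy0 hz0
            neg_mem' := by
              rintro y ⟨hy, hy0⟩
              refine ⟨I.neg_mem hy, ?_⟩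
              have : (⟨-y, I.neg_mem hy⟩ : I) = -(⟨y, hy⟩ : I) := rfl
              rw [this, TensorProduct.tmul_neg, map_neg]
              exact Submodule.neg_mem _ hy0 }
        have key : (x : A) ∈ T := by
          refine (AddSubgroup.closure_le T).mpr ?_ (hidem x x.2)
          rintro y ⟨b, hb, c, hc, rfl⟩
          refine ⟨I.mul_mem_left b hc, ?_⟩
          have h1 : (⟨b * c, I.mul_mem_left b hc⟩ : I) = idealRMul I hright c ⟨b, hb⟩ := rfl
          rw [h1]
          exact Submodule.subset_span
            ⟨rtMk (m ⊗ₜ[ℤ] (⟨b, hb⟩ : I)), c, hc, (rtSmul_mk_tmul I hright M c m ⟨b, hb⟩).symm⟩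
        obtain ⟨hmem, h0⟩ := key
        have : (⟨(x : A), hmem⟩ : I) = x := Subtype.ext rfl
        rwa [this] at h0
    | add x y hx hy =>
        exact Submodule.add_mem _ hx hy
  exact eq_zero_of_ann_of_smul I (h (RTensor A M I)) hann (hsmul ξ)

end PartA
section PartB

variable {A}

theorem mk'_eq_zero_of_mem (I : Ideal A) (hright : ∀ a ∈ I, ∀ b : A, a * b ∈ I)
    {a : A} (ha : a ∈ I) : RingCon.mk' (idealCon A I hright) a = 0 := by
  show (a : (idealCon A I hright).Quotient) = ((0 : A) : (idealCon A I hright).Quotient)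
  rw [RingCon.eq]
  show a - 0 ∈ I
  simpa using ha

set_option maxHeartbeats 1000000 in
set_option synthInstance.maxHeartbeats 400000 in
theorem partB (I : Ideal A) (hright : ∀ a ∈ I, ∀ b : A, a * b ∈ I)
    (h : ∀ (M : Type) [AddCommGroup M] [Module Aᵐᵒᵖ M],
        ∃ N' : Submodule Aᵐᵒᵖ M, rAnn A I M ⊓ N' = ⊥ ∧ rAnn A I M ⊔ N' = ⊤)
    (F : Type) [AddCommGroup F] [Module Aᵐᵒᵖ F] (hF : rAnn A I F = ⊥) :
    Module.Projective (idealCon A I hright).Quotientᵐᵒᵖ (F ⧸ rIdealSMul A I F) := by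
  let Q := (idealCon A I hright).Quotientᵐᵒᵖ
  let P := F ⧸ rIdealSMul A I F
  let φ : Aᵐᵒᵖ →+* Q := RingHom.op (RingCon.mk' (idealCon A I hright))
  let W : Type := P →₀ Q
  letI iW : Module Aᵐᵒᵖ W := Module.compHom W φ
  have hφsmul : ∀ (a : A) (z : P), (op (RingCon.mk' (idealCon A I hright) a) : Q) • z
      = op a • z := fun a z => rfl
  let tot : W →ₗ[Q] P := Finsupp.linearCombination Q id
  let totA : W →ₗ[Aᵐᵒᵖ] P :=
    { toFun := tot
      map_add' := tot.map_add
      map_smul' := fun c w => by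
        induction c using MulOpposite.rec' with
        | h a =>
          show tot (φ (op a) • w) = op a • tot w
          rw [map_smul]
          exact hφsmul a (tot w) }
  let mkF : F →ₗ[Aᵐᵒᵖ] P := (rIdealSMul A I F).mkQ
  let g : F × W →ₗ[Aᵐᵒᵖ] P :=
    mkF.comp (LinearMap.fst Aᵐᵒᵖ F W) - totA.comp (LinearMap.snd Aᵐᵒᵖ F W)
  let E := LinearMap.ker g
  letI iE1 : AddCommGroup E := inferInstance
  letI iE2 : Module Aᵐᵒᵖ E := inferInstance
  obtain ⟨N, hN1, hN2⟩ := h E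
  letI iN1 : AddCommGroup N := inferInstance
  letI iN2 : Module Aᵐᵒᵖ N := inferInstance
  let p : E →ₗ[Aᵐᵒᵖ] F := (LinearMap.fst Aᵐᵒᵖ F W).comp E.subtype
  have hker : LinearMap.ker p = rAnn A I E := by
    apply le_antisymm
    · intro e he a ha
      have h1 : (e : F × W).1 = 0 := he
      apply Subtype.ext
      show op a • (e : F × W) = 0
      apply Prod.ext
      · show op a • (e : F × W).1 = 0
        rw [h1, smul_zero]
      · show op a • (e : F × W).2 = 0
        show φ (op a) • (e : F × W).2 = 0
        have : φ (op a) = 0 := by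
          show op (RingCon.mk' (idealCon A I hright) a) = 0
          rw [mk'_eq_zero_of_mem I hright ha, op_zero]
        rw [this, zero_smul]
    · intro e he
      have h1 : (e : F × W).1 ∈ rAnn A I F := by
        intro a ha
        have := he a ha
        have h2 : op a • (e : F × W) = 0 := congrArg Subtype.val this
        exact congrArg Prod.fst h2
      rw [hF, Submodule.mem_bot] at h1
      exact h1
  have hp_surj : Function.Surjective p := by
    intro f
    have hmem : (f, Finsupp.single (mkF f) (1 : Q)) ∈ E := by
      show mkF f - totA (Finsupp.single (mkF f) (1 : Q)) = 0
      have : totA (Finsupp.single (mkF f) (1 : Q)) = mkF f := by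
        show tot (Finsupp.single (mkF f) (1 : Q)) = mkF f
        rw [Finsupp.linearCombination_single, one_smul, id]
      rw [this, sub_self]
    exact ⟨⟨_, hmem⟩, rfl⟩
  let p' : N →ₗ[Aᵐᵒᵖ] F := p.comp N.subtype
  have hp'_bij : Function.Bijective p' := by
    constructor
    · have hker' : LinearMap.ker p' = ⊥ := by
        rw [Submodule.eq_bot_iff]
        intro x hx
        have hx' : p (N.subtype x) = 0 := hx
        have hmem : N.subtype x ∈ rAnn A I E ⊓ N := by
          refine ⟨?_, x.2⟩
          rw [← hker]
          exact hx'
        rw [hN1, Submodule.mem_bot] at hmem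
        exact Subtype.ext hmem
      intro x y hxy
      have hmem : x - y ∈ LinearMap.ker p' := by
        rw [LinearMap.mem_ker, map_sub, hxy, sub_self]
      rw [hker', Submodule.mem_bot] at hmem
      exact sub_eq_zero.mp hmem
    · intro f
      obtain ⟨e, he⟩ := hp_surj f
      have hmem : e ∈ rAnn A I E ⊔ N := hN2 ▸ Submodule.mem_top
      obtain ⟨t, ht, n, hn, rfl⟩ := Submodule.mem_sup.mp hmem
      refine ⟨⟨n, hn⟩, ?_⟩
      show p (N.subtype ⟨n, hn⟩) = f
      rw [← hker] at ht
      have hpt : p t = 0 := ht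
      rw [← he, map_add, hpt, zero_add]
      rfl
  let eqv := LinearEquiv.ofBijective p' hp'_bij
  let σ2 : F →ₗ[Aᵐᵒᵖ] W :=
    (LinearMap.snd Aᵐᵒᵖ F W).comp (E.subtype.comp (N.subtype.comp eqv.symm.toLinearMap))
  have htot : ∀ f : F, tot (σ2 f) = mkF f := by
    intro f
    have h0 : g ((N.subtype (eqv.symm f) : E) : F × W) = 0 := (N.subtype (eqv.symm f)).2
    have h1 : mkF (((N.subtype (eqv.symm f) : E) : F × W)).1
        - totA (((N.subtype (eqv.symm f) : E) : F × W)).2 = 0 := h0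
    have h2 : (((N.subtype (eqv.symm f) : E) : F × W)).1 = f := by
      show p' (eqv.symm f) = f
      exact eqv.apply_symm_apply f
    have h3 : tot (σ2 f) = totA (((N.subtype (eqv.symm f) : E) : F × W)).2 := rfl
    rw [h3, ← sub_eq_zero.mp h1]
    exact congrArg mkF h2
  have hσI : ∀ a ∈ I, ∀ f : F, σ2 (op a • f) = 0 := by
    intro a ha f
    rw [map_smul]
    show φ (op a) • σ2 f = 0
    have : φ (op a) = 0 := by
      show op (RingCon.mk' (idealCon A I hright) a) = 0
      rw [mk'_eq_zero_of_mem I hright ha, op_zero]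
    rw [this, zero_smul]
  let g0 : P →ₗ[Aᵐᵒᵖ] W := Submodule.liftQ (rIdealSMul A I F) σ2 (by
    rw [rIdealSMul, Submodule.span_le]
    rintro _ ⟨m, a, ha, rfl⟩
    simp only [SetLike.mem_coe, LinearMap.mem_ker]
    exact hσI a ha m)
  let gQ : P →ₗ[Q] W :=
    { toFun := g0
      map_add' := g0.map_add
      map_smul' := by
        intro q x
        induction q using MulOpposite.rec' with
        | h qa =>
          induction qa using Quotient.inductionOn' with
          | h a =>
            obtain ⟨m, rfl⟩ := Submodule.Quotient.mk_surjective _ x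
            have e1 : (op (Quotient.mk'' a : (idealCon A I hright).Quotient) : Q)
                • (Submodule.Quotient.mk m : P) = Submodule.Quotient.mk (op a • m) := rfl
            show g0 ((op (Quotient.mk'' a : (idealCon A I hright).Quotient) : Q)
                • (Submodule.Quotient.mk m : P)) = _
            rw [e1]
            show σ2 (op a • m) = (op (Quotient.mk'' a : (idealCon A I hright).Quotient) : Q) • σ2 m
            rw [map_smul]
            rfl }
  haveI : Module.Projective Q W := inferInstance
  refine Module.Projective.of_split gQ tot ?_
  apply LinearMap.ext
  intro x
  obtain ⟨m, rfl⟩ := Submodule.Quotient.mk_surjective _ x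
  show tot (σ2 m) = _
  rw [htot m]
  rfl

end PartB
section RtMap

variable {A} {M M' : Type} [AddCommGroup M] [Module Aᵐᵒᵖ M]
  [AddCommGroup M'] [Module Aᵐᵒᵖ M'] {N : Type} [AddCommGroup N] [Module A N]

/-- Functoriality of the balanced tensor product in the first variable. -/
noncomputable def rtMap (f : M →ₗ[Aᵐᵒᵖ] M') (N : Type) [AddCommGroup N] [Module A N] :
    RTensor A M N →+ RTensor A M' N :=
  QuotientAddGroup.map _ _
    (LinearMap.rTensor N f.toAddMonoidHom.toIntLinearMap).toAddMonoidHom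
    (by
      rw [balancedRel, AddSubgroup.closure_le]
      rintro x ⟨m, a, n, rfl⟩
      simp only [AddSubgroup.coe_comap, Set.mem_preimage, LinearMap.toAddMonoidHom_coe,
        map_sub, LinearMap.rTensor_tmul, AddMonoidHom.coe_toIntLinearMap, SetLike.mem_coe]
      refine AddSubgroup.subset_closure ⟨f m, a, n, ?_⟩
      rw [show f (op a • m) = op a • f m from f.map_smul (op a) m])

@[simp] theorem rtMap_mk_tmul (f : M →ₗ[Aᵐᵒᵖ] M') (m : M) (n : N) :
    rtMap f N (rtMk (m ⊗ₜ[ℤ] n)) = rtMk (f m ⊗ₜ[ℤ] n) := rfl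

theorem muI_rtMap (I : Ideal A) (f : M →ₗ[Aᵐᵒᵖ] M') (ξ : RTensor A M I) :
    muI I (rtMap f I ξ) = f (muI I ξ) := by
  induction ξ using RTensor.induction_on with
  | zero => rw [map_zero, map_zero, map_zero, map_zero]
  | tmul m x =>
      rw [rtMap_mk_tmul, muI_mk_tmul, muI_mk_tmul]
      exact (f.map_smul (op (x : A)) m).symm
  | add x y hx hy => rw [map_add, map_add, map_add, map_add, hx, hy]

/-- `M ⊗ I → (M / ann) ⊗ I` is injective (kernel is the image of `ann ⊗ I`, which
vanishes by idempotency). -/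
theorem rtMap_mkQ_injective (I : Ideal A)
    (hidem : ∀ a ∈ I, a ∈ AddSubgroup.closure {x : A | ∃ b ∈ I, ∃ c ∈ I, x = b * c})
    (ξ : RTensor A M I) (hξ : rtMap (rAnn A I M).mkQ I ξ = 0) : ξ = 0 := by
  set t := rAnn A I M
  obtain ⟨ξ0, rfl⟩ := rtMk_surjective (A := A) ξ
  -- the relations downstairs are the image of the relations upstairs
  have hmapmk : ∀ y : M ⊗[ℤ] ↥I,
      (LinearMap.rTensor (I : Type) t.mkQ.toAddMonoidHom.toIntLinearMap).toAddMonoidHom y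
      = LinearMap.rTensor (I : Type) t.mkQ.toAddMonoidHom.toIntLinearMap y := fun _ => rfl
  have hrel : (balancedRel A (M ⧸ t) I) ≤
      AddSubgroup.map
        (LinearMap.rTensor (I : Type) t.mkQ.toAddMonoidHom.toIntLinearMap).toAddMonoidHom
        (balancedRel A M I) := by
    rw [balancedRel, AddSubgroup.closure_le]
    rintro x ⟨z, a, n, rfl⟩
    obtain ⟨m, rfl⟩ := Submodule.Quotient.mk_surjective t z
    refine ⟨(op a • m) ⊗ₜ[ℤ] n - m ⊗ₜ[ℤ] (a • n),
      AddSubgroup.subset_closure ⟨m, a, n, rfl⟩, ?_⟩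
    rw [hmapmk, map_sub, LinearMap.rTensor_tmul, LinearMap.rTensor_tmul]
    rfl
  have h0 : LinearMap.rTensor (I : Type) t.mkQ.toAddMonoidHom.toIntLinearMap ξ0
      ∈ balancedRel A (M ⧸ t) I := by
    have := hξ
    rw [show rtMap t.mkQ (I : Type) (rtMk ξ0) =
      QuotientAddGroup.mk' (balancedRel A (M ⧸ t) I)
        (LinearMap.rTensor (I : Type) t.mkQ.toAddMonoidHom.toIntLinearMap ξ0) from rfl,
      QuotientAddGroup.mk'_apply] at this
    exact (QuotientAddGroup.eq_zero_iff _).mp this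
  obtain ⟨ρ, hρ, hρ2⟩ := hrel h0
  rw [hmapmk] at hρ2
  have hexact : LinearMap.rTensor (I : Type) t.mkQ.toAddMonoidHom.toIntLinearMap (ξ0 - ρ) = 0 := by
    rw [map_sub, hρ2, sub_self]
  have hex : Function.Exact
      (LinearMap.rTensor (I : Type) t.subtype.toAddMonoidHom.toIntLinearMap)
      (LinearMap.rTensor (I : Type) t.mkQ.toAddMonoidHom.toIntLinearMap) := by
    apply rTensor_exact
    · intro y
      constructor
      · intro hy
        have : y ∈ t := by
          rwa [show t.mkQ.toAddMonoidHom.toIntLinearMap y = t.mkQ y from rfl,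
            Submodule.mkQ_apply, Submodule.Quotient.mk_eq_zero] at hy
        exact ⟨⟨y, this⟩, rfl⟩
      · rintro ⟨x, rfl⟩
        show t.mkQ (x : M) = 0
        rw [Submodule.mkQ_apply, Submodule.Quotient.mk_eq_zero]
        exact x.2
    · intro z
      obtain ⟨m, rfl⟩ := Submodule.Quotient.mk_surjective t z
      exact ⟨m, rfl⟩
  obtain ⟨η, hη⟩ := (hex (ξ0 - ρ)).mp hexact
  have himg : ∀ η0 : (t : Type) ⊗[ℤ] I,
      rtMk (A := A) (LinearMap.rTensor (I : Type) t.subtype.toAddMonoidHom.toIntLinearMap η0)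
        = 0 := by
    intro η0
    induction η0 with
    | zero => rw [map_zero, map_zero]
    | tmul x n =>
        rw [LinearMap.rTensor_tmul]
        exact rtMk_tmul_eq_zero I hidem x.2 n
    | add y z hy hz => rw [map_add, map_add, hy, hz, add_zero]
  have hρ0 : rtMk (A := A) ρ = 0 := by
    exact (QuotientAddGroup.eq_zero_iff ρ).mpr hρ
  have : rtMk (A := A) ξ0 = rtMk (ξ0 - ρ) + rtMk ρ := by rw [← map_add, sub_add_cancel]
  rw [this, hρ0, add_zero, ← hη]
  exact himg η

end RtMap
section PartC

variable {A}

/-- `M / ann_M(I)` has no `I`-torsion (by idempotency of `I`). -/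
theorem rAnn_quotient_eq_bot (I : Ideal A)
    (hidem : ∀ a ∈ I, a ∈ AddSubgroup.closure {x : A | ∃ b ∈ I, ∃ c ∈ I, x = b * c})
    (M : Type) [AddCommGroup M] [Module Aᵐᵒᵖ M] :
    rAnn A I (M ⧸ rAnn A I M) = ⊥ := by
  rw [Submodule.eq_bot_iff]
  intro z hz
  obtain ⟨m, rfl⟩ := Submodule.Quotient.mk_surjective _ z
  rw [Submodule.Quotient.mk_eq_zero]
  intro b hb
  let T : AddSubgroup A :=
    { carrier := {y : A | op y • m = 0}
      zero_mem' := by show op (0 : A) • m = 0; rw [op_zero, zero_smul]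
      add_mem' := by
        intro y y' hy hy'
        show op (y + y') • m = 0
        rw [op_add, add_smul, hy, hy', add_zero]
      neg_mem' := by
        intro y hy
        show op (-y) • m = 0
        rw [op_neg, neg_smul, hy, neg_zero] }
  have : b ∈ T := by
    refine (AddSubgroup.closure_le T).mpr ?_ (hidem b hb)
    rintro y ⟨a, ha, c, hc, rfl⟩
    show op (a * c) • m = 0
    have h1 : op a • m ∈ rAnn A I M := by
      have := hz a ha
      rwa [← Submodule.Quotient.mk_smul, Submodule.Quotient.mk_eq_zero] at this
    rw [show op (a * c) = op c * op a from rfl, mul_smul]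
    exact h1 c hc
  exact this

/-- Elements of `MI` are in the image of `μ : M ⊗ I → M`. -/
theorem exists_muI_eq (I : Ideal A) (hright : ∀ a ∈ I, ∀ b : A, a * b ∈ I)
    (M : Type) [AddCommGroup M] [Module Aᵐᵒᵖ M]
    {x : M} (hx : x ∈ rIdealSMul A I M) : ∃ ξ : RTensor A M I, muI I ξ = x := by
  have hsm : ∀ (a : A) (ξ : RTensor A M I),
      muI I (rtSmul I hright M a ξ) = op a • muI I ξ := by
    intro a ξ
    induction ξ using RTensor.induction_on with
    | zero => rw [map_zero, map_zero, smul_zero]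
    | tmul m y =>
        rw [rtSmul_mk_tmul, muI_mk_tmul, muI_mk_tmul]
        show op ((y : A) * a) • m = _
        rw [show op ((y : A) * a) = op a * op (y : A) from rfl, mul_smul]
    | add ξ ζ hξ hζ => rw [map_add, map_add, hξ, hζ, map_add, smul_add]
  refine Submodule.span_induction ?_ ⟨0, map_zero _⟩ ?_ ?_ hx
  · rintro _ ⟨m, a, ha, rfl⟩
    exact ⟨rtMk (m ⊗ₜ[ℤ] (⟨a, ha⟩ : I)), muI_mk_tmul I m _⟩
  · rintro y z - - ⟨ξ, hξ⟩ ⟨ζ, hζ⟩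
    exact ⟨ξ + ζ, by rw [map_add, hξ, hζ]⟩
  · rintro c y - ⟨ξ, hξ⟩
    induction c using MulOpposite.rec' with
    | h a => exact ⟨rtSmul I hright M a ξ, by rw [hsm, hξ]⟩

set_option maxHeartbeats 1000000 in
set_option synthInstance.maxHeartbeats 400000 in
theorem partC (I : Ideal A) (hright : ∀ a ∈ I, ∀ b : A, a * b ∈ I)
    (hidem : ∀ a ∈ I, a ∈ AddSubgroup.closure {x : A | ∃ b ∈ I, ∃ c ∈ I, x = b * c})
    (hflat : ∀ (M : Type) [AddCommGroup M] [Module Aᵐᵒᵖ M],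
        Function.Injective (pureMap A I M))
    (hproj : ∀ (F : Type) [AddCommGroup F] [Module Aᵐᵒᵖ F], rAnn A I F = ⊥ →
        Module.Projective (idealCon A I hright).Quotientᵐᵒᵖ (F ⧸ rIdealSMul A I F))
    (M : Type) [AddCommGroup M] [Module Aᵐᵒᵖ M] :
    ∃ N' : Submodule Aᵐᵒᵖ M, rAnn A I M ⊓ N' = ⊥ ∧ rAnn A I M ⊔ N' = ⊤ := by
  let Q := (idealCon A I hright).Quotientᵐᵒᵖ
  set t := rAnn A I M with ht
  let F := M ⧸ t
  let π : M →ₗ[Aᵐᵒᵖ] F := t.mkQ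
  let MI := rIdealSMul A I M
  let FI := rIdealSMul A I F
  -- Step 2 : t ∩ MI = 0
  have hzero : ∀ x ∈ t, x ∈ MI → x = 0 := by
    intro x hx hxMI
    obtain ⟨ξ, hξ⟩ := exists_muI_eq I hright M hxMI
    have hmuinj : Function.Injective (muI (M := F) I) := by
      intro a b hab
      exact hflat F (nuA_injective hab)
    have h1 : muI I (rtMap π I ξ) = 0 := by
      rw [muI_rtMap, hξ]
      show π x = 0
      rw [Submodule.mkQ_apply, Submodule.Quotient.mk_eq_zero]
      exact hx
    have h2 : rtMap π I ξ = 0 := hmuinj (by rw [h1, map_zero])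
    have h3 : ξ = 0 := rtMap_mkQ_injective I hidem ξ h2
    rw [← hξ, h3, map_zero]
  -- Step 3 : projectivity of F/FI and the lifting
  have hFann : rAnn A I F = ⊥ := rAnn_quotient_eq_bot I hidem M
  haveI hPr : Module.Projective Q (F ⧸ FI) := hproj F hFann
  let ψ0 : (M ⧸ MI) →ₗ[Aᵐᵒᵖ] (F ⧸ FI) :=
    Submodule.liftQ MI (FI.mkQ.comp π) (by
      rw [show MI = rIdealSMul A I M from rfl, rIdealSMul, Submodule.span_le]
      rintro _ ⟨m, a, ha, rfl⟩
      simp only [SetLike.mem_coe, LinearMap.mem_ker, LinearMap.comp_apply]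
      rw [show π (op a • m) = op a • π m from map_smul π (op a) m,
        Submodule.mkQ_apply, Submodule.Quotient.mk_eq_zero]
      exact Submodule.subset_span ⟨π m, a, ha, rfl⟩)
  let ψ : (M ⧸ MI) →ₗ[Q] (F ⧸ FI) :=
    { toFun := ψ0
      map_add' := ψ0.map_add
      map_smul' := by
        intro q x
        induction q using MulOpposite.rec' with
        | h qa =>
          induction qa using Quotient.inductionOn' with
          | h a =>
            obtain ⟨m, rfl⟩ := Submodule.Quotient.mk_surjective _ x
            show ψ0 ((op (Quotient.mk'' a : (idealCon A I hright).Quotient) : Q)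
                • (Submodule.Quotient.mk m)) = _
            rfl }
  have hψmk : ∀ m : M, ψ (Submodule.Quotient.mk m) = Submodule.Quotient.mk (π m) := fun m => rfl
  have hψsurj : Function.Surjective ψ := by
    intro z
    obtain ⟨f, rfl⟩ := Submodule.Quotient.mk_surjective _ z
    obtain ⟨m, rfl⟩ := Submodule.Quotient.mk_surjective t f
    exact ⟨Submodule.Quotient.mk m, rfl⟩
  obtain ⟨σ, hσ⟩ := Module.projective_lifting_property ψ LinearMap.id hψsurj
  have hσsec : ∀ z, ψ (σ z) = z := by
    intro z
    rw [← LinearMap.comp_apply, hσ, LinearMap.id_apply]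
  -- Step 4 : the complement
  let N' : Submodule Aᵐᵒᵖ M :=
    { carrier := {m : M | ∃ y, σ y = Submodule.Quotient.mk (p := MI) m}
      zero_mem' := ⟨0, by rw [map_zero, ← Submodule.Quotient.mk_zero MI]⟩
      add_mem' := by
        rintro m1 m2 ⟨y1, hy1⟩ ⟨y2, hy2⟩
        exact ⟨y1 + y2, by rw [map_add, hy1, hy2, ← Submodule.Quotient.mk_add]⟩
      smul_mem' := by
        intro c m hm
        obtain ⟨y, hy⟩ := hm
        induction c using MulOpposite.rec' with
        | h a =>
          refine ⟨(op (Quotient.mk'' a : (idealCon A I hright).Quotient) : Q) • y, ?_⟩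
          rw [map_smul, hy]
          rw [show ∀ z : M ⧸ MI,
              (op (Quotient.mk'' a : (idealCon A I hright).Quotient) : Q) • z = op a • z
              from fun _ => rfl, Submodule.Quotient.mk_smul] }
  refine ⟨N', ?_, ?_⟩
  · rw [Submodule.eq_bot_iff]
    rintro x ⟨hx, y, hy⟩
    have h1 : ψ (Submodule.Quotient.mk x) = 0 := by
      rw [hψmk]
      rw [show π x = 0 from by
        rw [Submodule.mkQ_apply, Submodule.Quotient.mk_eq_zero]; exact hx]
      exact Submodule.Quotient.mk_zero FI
    have h2 : y = 0 := by rw [← hσsec y, hy, h1]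
    have h3 : (Submodule.Quotient.mk x : M ⧸ MI) = 0 := by rw [← hy, h2, map_zero]
    rw [Submodule.Quotient.mk_eq_zero] at h3
    exact hzero x hx h3
  · rw [Submodule.eq_top_iff']
    intro m
    -- preimage of FI is inside t ⊔ MI
    have hFIle : FI ≤ Submodule.map π (t ⊔ MI) := by
      rw [show FI = rIdealSMul A I F from rfl, rIdealSMul, Submodule.span_le]
      rintro _ ⟨f, a, ha, rfl⟩
      obtain ⟨m₀, rfl⟩ := Submodule.Quotient.mk_surjective t f
      refine ⟨op a • m₀, Submodule.mem_sup_right (Submodule.subset_span ⟨m₀, a, ha, rfl⟩), ?_⟩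
      rw [map_smul]
      rfl
    have hker : ∀ m' : M, ψ (Submodule.Quotient.mk m') = 0 → m' ∈ t ⊔ MI := by
      intro m' hm'
      rw [hψmk, Submodule.Quotient.mk_eq_zero] at hm'
      obtain ⟨u, hu, hue⟩ := hFIle hm'
      have h4 : m' - u ∈ t := by
        have : π (m' - u) = 0 := by rw [map_sub, hue, sub_self]
        rwa [Submodule.mkQ_apply, Submodule.Quotient.mk_eq_zero] at this
      have : m' = (m' - u) + u := by abel
      rw [this]
      exact Submodule.add_mem _ (Submodule.mem_sup_left h4) hu
    obtain ⟨w, hw⟩ := Submodule.Quotient.mk_surjective MI (σ (ψ (Submodule.Quotient.mk m)))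
    have hwN : w ∈ N' := ⟨ψ (Submodule.Quotient.mk m), hw.symm⟩
    have hd : ψ (Submodule.Quotient.mk (m - w)) = 0 := by
      have : (Submodule.Quotient.mk (m - w) : M ⧸ MI) =
          Submodule.Quotient.mk m - Submodule.Quotient.mk w := by
        rw [Submodule.Quotient.mk_sub]
      rw [this, map_sub, hw, hσsec, sub_self]
    have hmw : m - w ∈ t ⊔ MI := hker _ hd
    have hMIN : MI ≤ N' := by
      intro m₀ hm₀
      exact ⟨0, by rw [map_zero, eq_comm, Submodule.Quotient.mk_eq_zero]; exact hm₀⟩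
    have hsup : t ⊔ MI ≤ t ⊔ N' := sup_le_sup_left hMIN t
    have : m = (m - w) + w := by abel
    rw [this]
    exact Submodule.add_mem _ (hsup hmw) (Submodule.mem_sup_right hwN)

end PartC

/-- let `I` be a two-sided idempotent ideal of `A` with zero left
annihilator.  Then `ann_M(I)` is a direct summand of every right `A`-module `M` if and
only if `A/I` is flat as a left `A`-module (equivalently, `I` is pure as a left ideal:
`I → A` stays injective after tensoring with any right `A`-module) and, for every right
`A`-module `F` with `ann_F(I) = 0`, the quotient `F/FI` is projective as a right
`A/I`-module. -/
theorem stmt_14 (I : Ideal A)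
    (hright : ∀ a ∈ I, ∀ b : A, a * b ∈ I)
    (hidem : ∀ a ∈ I, a ∈ AddSubgroup.closure {x : A | ∃ b ∈ I, ∃ c ∈ I, x = b * c})
    (hlann : ∀ a : A, (∀ x ∈ I, a * x = 0) → a = 0) :
    (∀ (M : Type) [AddCommGroup M] [Module Aᵐᵒᵖ M],
        ∃ N' : Submodule Aᵐᵒᵖ M, rAnn A I M ⊓ N' = ⊥ ∧ rAnn A I M ⊔ N' = ⊤)
    ↔
    ((∀ (M : Type) [AddCommGroup M] [Module Aᵐᵒᵖ M],
        Function.Injective (pureMap A I M)) ∧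
     (∀ (F : Type) [AddCommGroup F] [Module Aᵐᵒᵖ F], rAnn A I F = ⊥ →
        Module.Projective (idealCon A I hright).Quotientᵐᵒᵖ (F ⧸ rIdealSMul A I F))) := by
  constructor
  · intro h
    exact ⟨fun M _ _ => partA I hright hidem h M, fun F _ _ hF => partB I hright h F hF⟩
  · rintro ⟨hflat, hproj⟩ M _ _
    exact partC I hright hidem hflat hproj M
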